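/- Let F be a field, N ≥ 1, and D = (C_1,…,C_r) a northwest diagram with all columns contained in {1,…,N}. Let Ĉ = ⋂_{j∈S₀} C_j for some nonempty S₀ ⊆ {1,…,r}, and assume that every set of the form ⋂_{j∈S} C_j (S nonempty) that is strictly contained in Ĉ is equal to some column of D. Let V_1,…,V_r be subspaces of F^N satisfying the intersection conditions for D. Then there exists a subspace V̂ of F^N with dim V̂ = |Ĉ| such that Σ_{j : C_j ⊆ Ĉ} V_j ⊆ V̂ ⊆ ⋂_{j : Ĉ ⊆ C_j} V_j and the extended family satisfies the intersection conditions for the diagram (C_1,…,C_r,Ĉ); in particular dim(V̂ ∩ ⋂_{j∈S} V_j) ≥ |Ĉ ∩ ⋂_{j∈S} C_j| for every subset S ⊆ {1,…,r}. -/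

import Mathlib

/-- A diagram, given as a list of columns `C : Fin r → Finset ℕ`, is *northwest* if
for all `j ≤ j'`, `i ∈ C j` and `i' ∈ C j'` imply `min i i' ∈ C j`. -/
def IsNorthwest {r : ℕ} (C : Fin r → Finset ℕ) : Prop :=
  ∀ j j' : Fin r, j ≤ j' → ∀ i ∈ C j, ∀ i' ∈ C j', min i i' ∈ C j

/-- `A` is an *initial subset* of `B` : `A ⊊ B` and every element of `B \ A` is greater
than every element of `A`. -/
def InitSub (A B : Finset ℕ) : Prop :=
  A ⊂ B ∧ ∀ x ∈ B \ A, ∀ y ∈ A, y < x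

/-- Lexicographic comparison of finite subsets of `ℕ`, comparing the increasing lists of
elements: `A <lex B` iff the sorted list of `A` is smaller than that of `B` in the
(strict) lexicographic order on lists (in particular a proper initial segment is
smaller). -/
def LexLT (A B : Finset ℕ) : Prop :=
  List.Lex (· < ·) (A.sort (· ≤ ·)) (B.sort (· ≤ ·))

/-- A list of columns is *lexicographic* if it is strictly increasing in `LexLT`
(in particular the columns are pairwise distinct). -/
def IsLex {r : ℕ} (C : Fin r → Finset ℕ) : Prop :=
  ∀ a b : Fin r, a < b → LexLT (C a) (C b)

open Module Submodule

/-- Between nested submodules one can find a submodule of any intermediate finrank. -/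
lemma exists_intermediate_finrank {F V : Type*} [Field F] [AddCommGroup V] [Module F V]
    [FiniteDimensional F V] :
    ∀ (d : ℕ) (L U : Submodule F V) (c : ℕ), L ≤ U → finrank F L ≤ c → c ≤ finrank F U →
      c - finrank F L ≤ d → ∃ Vh : Submodule F V, finrank F Vh = c ∧ L ≤ Vh ∧ Vh ≤ U := by
  intro d
  induction d with
  | zero =>
    intro L U c hLU h1 h2 h3
    exact ⟨L, by omega, le_rfl, hLU⟩
  | succ d ih =>
    intro L U c hLU h1 h2 h3
    rcases eq_or_lt_of_le h1 with heq | hlt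
    · exact ⟨L, heq, le_rfl, hLU⟩
    · have hLU' : L < U := by
        rcases lt_or_eq_of_le hLU with h | h
        · exact h
        · exfalso; rw [h] at hlt; omega
      obtain ⟨x, hxU, hxL⟩ := SetLike.exists_of_lt hLU'
      have hx0 : x ≠ 0 := fun h => hxL (h ▸ L.zero_mem)
      have hle' : L ⊔ (F ∙ x) ≤ U := sup_le hLU ((Submodule.span_singleton_le_iff_mem x U).mpr hxU)
      have hlt' : L < L ⊔ (F ∙ x) :=
        lt_of_le_of_ne le_sup_left
          (fun h => hxL (h ▸ Submodule.mem_sup_right (Submodule.mem_span_singleton_self x)))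
      have hfr_lt : finrank F L < finrank F ↥(L ⊔ (F ∙ x)) :=
        Submodule.finrank_lt_finrank_of_lt hlt'
      have hfr_le : finrank F ↥(L ⊔ (F ∙ x)) ≤ finrank F L + 1 := by
        calc finrank F ↥(L ⊔ (F ∙ x)) ≤ finrank F L + finrank F ↥(F ∙ x) :=
              Submodule.finrank_add_le_finrank_add_finrank _ _
          _ ≤ finrank F L + 1 := by rw [finrank_span_singleton hx0]
      obtain ⟨Vh, h⟩ := ih (L ⊔ (F ∙ x)) U c hle' (by omega) h2 (by omega)
      exact ⟨Vh, h.1, le_trans le_sup_left h.2.1, h.2.2⟩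

lemma finrank_biSup_le_card_sup {F : Type} [Field F] {N r : ℕ}
    (C : Fin r → Finset ℕ) (hNW : IsNorthwest C) (W : Fin r → Submodule F (Fin N → F))
    (hdim : ∀ j, finrank F (W j) = (C j).card)
    (hpair : ∀ j k, (C j ∩ C k).card ≤ finrank F ↥(W j ⊓ W k))
    (Q : Finset (Fin r)) :
    finrank F ↥(⨆ j ∈ Q, W j) ≤ (Q.sup C).card := by
  induction Q using Finset.induction_on_max with
  | empty => simp
  | insert k Q hk ih =>
    have hQ : k ∉ Q := fun h => lt_irrefl k (hk k h)
    rw [← Finset.sup_eq_iSup] at ih ⊢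
    rw [Finset.sup_insert (b := k) (s := Q) (f := W), Finset.sup_insert (b := k) (s := Q) (f := C)]
    -- key : card of (C k ⊓ Q.sup C) is at most finrank of (W k ⊓ Q.sup W)
    have key : (C k ⊓ Q.sup C).card ≤ finrank F ↥(W k ⊓ Q.sup W) := by
      rcases Finset.eq_empty_or_nonempty (C k ⊓ Q.sup C) with he | hne
      · rw [he]; simp
      · obtain ⟨x, hx⟩ := hne
        rw [Finset.inf_eq_inter, Finset.mem_inter] at hx
        obtain ⟨hxk, hxQ⟩ := hx
        -- Q is nonempty since Q.sup C is
        have hQne : Q.Nonempty := by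
          by_contra h
          rw [Finset.not_nonempty_iff_eq_empty] at h
          rw [h] at hxQ; simp at hxQ
        -- pick j* maximizing (C j).max
        obtain ⟨jStar, hjQ, hjmax⟩ := Finset.exists_max_image Q (fun j => (C j).max) hQne
        have hsub : (C k ⊓ Q.sup C) ⊆ C jStar ∩ C k := by
          intro y hy
          rw [Finset.inf_eq_inter, Finset.mem_inter] at hy
          obtain ⟨hyk, hyQ⟩ := hy
          rw [Finset.mem_sup] at hyQ
          obtain ⟨j, hjmem, hyj⟩ := hyQ
          have hy_le : (y : WithBot ℕ) ≤ (C jStar).max :=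
            le_trans (Finset.le_max hyj) (hjmax j hjmem)
          have hCjs : (C jStar).Nonempty := by
            rcases Finset.eq_empty_or_nonempty (C jStar) with h | h
            · rw [h] at hy_le; simp [Finset.max_empty] at hy_le
            · exact h
          have hyle : y ≤ (C jStar).max' hCjs := by
            rw [← Finset.coe_max' hCjs] at hy_le
            exact WithBot.coe_le_coe.mp hy_le
          have := hNW jStar k (le_of_lt (hk jStar hjQ)) _ (Finset.max'_mem _ hCjs) y hyk
          rw [min_eq_right hyle] at this
          exact Finset.mem_inter.mpr ⟨this, hyk⟩
        calc (C k ⊓ Q.sup C).card ≤ (C jStar ∩ C k).card := Finset.card_le_card hsub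
          _ ≤ finrank F ↥(W jStar ⊓ W k) := hpair jStar k
          _ ≤ finrank F ↥(W k ⊓ Q.sup W) := by
              apply Submodule.finrank_mono
              rw [inf_comm (W k)]
              exact inf_le_inf_right _ (Finset.le_sup hjQ)
    have hrk := Submodule.finrank_sup_add_finrank_inf_eq (W k) (Q.sup W)
    have hcd : (C k ⊔ Q.sup C).card + (C k ⊓ Q.sup C).card = (C k).card + (Q.sup C).card :=
      Finset.card_union_add_card_inter (C k) (Q.sup C)
    have h1 := hdim k
    omega


/-- One step in the proof of Proposition `conn fibers` (a): a configuration satisfying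
the intersection conditions for a northwest diagram `D` can be extended by a subspace
`V̂` for an intersection `Ĉ = ⋂_{j ∈ S₀} C j` of columns, provided every intersection of
columns strictly contained in `Ĉ` is already a column; the extended family satisfies the
intersection conditions for the diagram `(C_1,…,C_r,Ĉ)`. -/
theorem extend_configuration (F : Type) [Field F] (N r : ℕ) (hN : 1 ≤ N)
    (C : Fin r → Finset ℕ) (hNW : IsNorthwest C)
    (hsub : ∀ j, C j ⊆ Finset.Icc 1 N)
    (S₀ : Finset (Fin r)) (hS₀ : S₀.Nonempty)
    (hbelow : ∀ (S : Finset (Fin r)) (hS : S.Nonempty),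
      S.inf' hS C ⊂ S₀.inf' hS₀ C → ∃ j, S.inf' hS C = C j)
    (W : Fin r → Submodule F (Fin N → F))
    (hdim : ∀ j, Module.finrank F (W j) = (C j).card)
    (hinf : ∀ (S : Finset (Fin r)) (hS : S.Nonempty),
      (S.inf' hS C).card ≤ Module.finrank F ↥(⨅ j ∈ S, W j)) :
    ∃ Vhat : Submodule F (Fin N → F),
      Module.finrank F Vhat = (S₀.inf' hS₀ C).card ∧
      (⨆ (j : Fin r) (_ : C j ⊆ S₀.inf' hS₀ C), W j) ≤ Vhat ∧
      Vhat ≤ (⨅ (j : Fin r) (_ : S₀.inf' hS₀ C ⊆ C j), W j) ∧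
      (∀ (S : Finset (Fin r)) (hS : S.Nonempty),
        ((S₀.inf' hS₀ C) ∩ S.inf' hS C).card ≤
          Module.finrank F ↥(Vhat ⊓ ⨅ j ∈ S, W j)) := by
  classical
  set Ch := S₀.inf' hS₀ C with hCh
  have hpair : ∀ j k, (C j ∩ C k).card ≤ finrank F ↥(W j ⊓ W k) := by
    intro j k
    by_cases h : j = k
    · subst h
      rw [Finset.inter_self, inf_idem, hdim j]
    · have hS : ({j, k} : Finset (Fin r)).Nonempty := ⟨j, by simp⟩
      have h1 := hinf {j, k} hS
      have h2 : ({j, k} : Finset (Fin r)).inf' hS C = C j ∩ C k := by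
        apply le_antisymm
        · exact Finset.subset_inter (Finset.inf'_le C (by simp)) (Finset.inf'_le C (by simp))
        · refine Finset.le_inf' hS C fun b hb => ?_
          rcases Finset.mem_insert.mp hb with rfl | hb
          · exact Finset.inter_subset_left
          · rw [Finset.mem_singleton.mp hb]
            exact Finset.inter_subset_right
      have h3 : (⨅ i ∈ ({j, k} : Finset (Fin r)), W i) = W j ⊓ W k := by
        rw [← Finset.inf_eq_iInf]
        simp [Finset.inf_insert]
      rw [h2, h3] at h1
      exact h1
  have hmono : ∀ j k, C j ⊆ C k → W j ≤ W k := by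
    intro j k hjk
    have h1 : (C j ∩ C k) = C j := Finset.inter_eq_left.mpr hjk
    have h2 : W j ⊓ W k = W j := by
      apply Submodule.eq_of_le_of_finrank_le inf_le_left
      rw [hdim j, ← h1]
      exact hpair j k
    rw [← h2]
    exact inf_le_right
  set T := Finset.univ.filter (fun j => Ch ⊆ C j) with hT
  set Q := Finset.univ.filter (fun j => C j ⊆ Ch) with hQdef
  obtain ⟨j₀, hj₀⟩ := id hS₀
  have hj₀T : j₀ ∈ T := by
    rw [hT, Finset.mem_filter]
    exact ⟨Finset.mem_univ _, Finset.inf'_le C hj₀⟩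
  have hTne : T.Nonempty := ⟨j₀, hj₀T⟩
  have hS₀T : S₀ ⊆ T := by
    intro j hj
    rw [hT, Finset.mem_filter]
    exact ⟨Finset.mem_univ _, Finset.inf'_le C hj⟩
  have hTC : T.inf' hTne C = Ch := by
    apply le_antisymm
    · exact Finset.inf'_mono C hS₀T hS₀
    · exact Finset.le_inf' hTne C fun j hj => (Finset.mem_filter.mp hj).2
  have hU : Ch.card ≤ finrank F ↥(⨅ j ∈ T, W j) := by
    have := hinf T hTne
    rw [hTC] at this
    exact this
  have hUeq : (⨅ j ∈ T, W j) = ⨅ (j : Fin r) (_ : Ch ⊆ C j), W j := by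
    simp only [hT, Finset.mem_filter, Finset.mem_univ, true_and]
  have hLeq : (⨆ j ∈ Q, W j) = ⨆ (j : Fin r) (_ : C j ⊆ Ch), W j := by
    simp only [hQdef, Finset.mem_filter, Finset.mem_univ, true_and]
  have hL : finrank F ↥(⨆ j ∈ Q, W j) ≤ Ch.card := by
    refine le_trans (finrank_biSup_le_card_sup C hNW W hdim hpair Q) ?_
    exact Finset.card_le_card (Finset.sup_le fun j hj => (Finset.mem_filter.mp hj).2)
  have hLU : (⨆ j ∈ Q, W j) ≤ ⨅ j ∈ T, W j :=
    iSup₂_le fun j hj => le_iInf₂ fun k hk =>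
      hmono j k (Finset.Subset.trans (Finset.mem_filter.mp hj).2 (Finset.mem_filter.mp hk).2)
  obtain ⟨Vh, hVdim, hLV, hVU⟩ :=
    exists_intermediate_finrank Ch.card (⨆ j ∈ Q, W j) (⨅ j ∈ T, W j) Ch.card hLU hL hU
      (Nat.sub_le _ _)
  refine ⟨Vh, hVdim, ?_, ?_, ?_⟩
  · rw [← hLeq]; exact hLV
  · rw [← hUeq]; exact hVU
  · intro S hS
    by_cases hcase : Ch ⊆ S.inf' hS C
    · have h1 : Ch ∩ S.inf' hS C = Ch := Finset.inter_eq_left.mpr hcase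
      have h2 : Vh ≤ ⨅ j ∈ S, W j := by
        refine le_iInf₂ fun j hj => hVU.trans ?_
        exact iInf₂_le j (Finset.mem_filter.mpr ⟨Finset.mem_univ _,
          Finset.Subset.trans hcase (Finset.inf'_le C hj)⟩)
      rw [h1, inf_eq_left.mpr h2, hVdim]
    · have hS' : (S₀ ∪ S).Nonempty := ⟨j₀, Finset.mem_union_left _ hj₀⟩
      have hS'C : (S₀ ∪ S).inf' hS' C = Ch ∩ S.inf' hS C := by
        rw [Finset.inf'_union ⟨j₀, hj₀⟩ hS C]
        rfl
      have hstrict : (S₀ ∪ S).inf' hS' C ⊂ Ch := by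
        rw [hS'C]
        refine Finset.ssubset_iff_subset_ne.mpr ⟨Finset.inter_subset_left, fun h => hcase ?_⟩
        rw [← h]
        exact Finset.inter_subset_right
      obtain ⟨k, hkC⟩ := hbelow (S₀ ∪ S) hS' hstrict
      have hkC' : C k = Ch ∩ S.inf' hS C := by rw [← hkC, hS'C]
      have hkCh : C k ⊆ Ch := by rw [hkC']; exact Finset.inter_subset_left
      have hkS : C k ⊆ S.inf' hS C := by rw [hkC']; exact Finset.inter_subset_right
      have hkQ : k ∈ Q := Finset.mem_filter.mpr ⟨Finset.mem_univ _, hkCh⟩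
      have hWkV : W k ≤ Vh := le_trans (le_iSup₂ (f := fun j _ => W j) k hkQ) hLV
      have hins : (insert k S).inf' (Finset.insert_nonempty k S) C = C k := by
        rw [Finset.inf'_insert (H := hS)]
        exact inf_eq_left.mpr hkS
      have h5 := hinf (insert k S) (Finset.insert_nonempty k S)
      rw [hins] at h5
      have h6 : (⨅ j ∈ insert k S, W j) = W k ⊓ ⨅ j ∈ S, W j := by
        rw [← Finset.inf_eq_iInf, ← Finset.inf_eq_iInf, Finset.inf_insert]
      rw [h6] at h5
      have h7 : W k ⊓ (⨅ j ∈ S, W j) = W k :=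
        Submodule.eq_of_le_of_finrank_le inf_le_left (by rw [hdim k]; exact h5)
      have hWkI : W k ≤ ⨅ j ∈ S, W j := by rw [← h7]; exact inf_le_right
      calc (Ch ∩ S.inf' hS C).card = (C k).card := by rw [← hkC']
        _ = finrank F ↥(W k) := (hdim k).symm
        _ ≤ finrank F ↥(Vh ⊓ ⨅ j ∈ S, W j) := Submodule.finrank_mono (le_inf hWkV hWkI)
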